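/- Fix λ > 0. For each N ≥ 1 let a_N = e^{λ/(N+1)} and define f(N) = a_N + ∑_{k=2}^{N+1} (a_N^k − a_N^{k-1})/(1 + a_N + ... + a_N^{k-1}). Then lim_{N→∞} f(N) = 1. -/

import Mathlib

open Finset Real Filter

lemma aux_exp_sub_one_le {x : ℝ} (hx : 0 ≤ x) : Real.exp x - 1 ≤ x * Real.exp x := by
  have h := Real.add_one_le_exp (-x)
  rw [Real.exp_neg] at h
  have hp := Real.exp_pos x
  have h2 : (1 - x) * Real.exp x ≤ 1 := by
    have h3 := mul_le_mul_of_nonneg_right h hp.le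
    rw [inv_mul_cancel₀ hp.ne'] at h3
    calc (1 - x) * Real.exp x = (-x + 1) * Real.exp x := by ring
      _ ≤ 1 := h3
  nlinarith

lemma aux_log_tendsto : Tendsto (fun N : ℕ => (1 + Real.log (N + 1)) / (N + 1)) atTop (nhds 0) := by
  have h1 : Tendsto (fun x : ℝ => Real.log x ^ 1 / (1 * x + 0)) atTop (nhds 0) :=
    Real.tendsto_pow_log_div_mul_add_atTop 1 0 1 one_ne_zero
  have h2 : Tendsto (fun N : ℕ => ((N : ℝ) + 1)) atTop atTop :=
    tendsto_natCast_atTop_atTop.atTop_add tendsto_const_nhds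
  have h3 : Tendsto (fun N : ℕ => Real.log (N + 1) / (N + 1)) atTop (nhds 0) := by
    have := h1.comp h2
    simpa [Function.comp_def] using this
  have h4 : Tendsto (fun N : ℕ => (1 : ℝ) / (N + 1)) atTop (nhds 0) :=
    tendsto_one_div_add_atTop_nhds_zero_nat
  have := h4.add h3
  simpa [add_div] using this

theorem stmt10 (lam : ℝ) (hlam : 0 < lam) :
    Filter.Tendsto
      (fun N : ℕ =>
        Real.exp (lam / (N + 1)) +
          ∑ k ∈ Finset.Icc 2 (N + 1),
            (Real.exp (lam / (N + 1)) ^ k - Real.exp (lam / (N + 1)) ^ (k - 1)) /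
              (∑ l ∈ Finset.range k, Real.exp (lam / (N + 1)) ^ l))
      Filter.atTop (nhds 1) := by
  set a : ℕ → ℝ := fun N => Real.exp (lam / (N + 1)) with ha
  have ha1 : ∀ N : ℕ, 1 ≤ a N := fun N => Real.one_le_exp (by positivity)
  have haN : ∀ N : ℕ, a N ^ (N + 1) = Real.exp lam := by
    intro N
    rw [ha, ← Real.exp_nat_mul]
    congr 1
    field_simp
    norm_num
  set S : ℕ → ℝ := fun N => ∑ k ∈ Finset.Icc 2 (N + 1),
      (a N ^ k - a N ^ (k - 1)) / (∑ l ∈ Finset.range k, a N ^ l) with hS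
  have hS0 : ∀ N, 0 ≤ S N := by
    intro N
    apply Finset.sum_nonneg
    intro k hk
    apply div_nonneg
    · have : a N ^ (k - 1) ≤ a N ^ k := pow_le_pow_right₀ (ha1 N) (Nat.sub_le k 1)
      linarith
    · exact Finset.sum_nonneg fun l _ => by positivity
  -- upper bound for S
  have hSle : ∀ N : ℕ, S N ≤ Real.exp lam * (a N - 1) * (1 + Real.log (N + 1)) := by
    intro N
    have hc0 : 0 ≤ Real.exp lam * (a N - 1) := by
      have := ha1 N
      have := Real.exp_pos lam
      nlinarith
    have hterm : ∀ k ∈ Finset.Icc 2 (N + 1),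
        (a N ^ k - a N ^ (k - 1)) / (∑ l ∈ Finset.range k, a N ^ l)
          ≤ Real.exp lam * (a N - 1) * (k : ℝ)⁻¹ := by
      intro k hk
      rw [Finset.mem_Icc] at hk
      have hden : (k : ℝ) ≤ ∑ l ∈ Finset.range k, a N ^ l := by
        calc (k : ℝ) = ∑ _l ∈ Finset.range k, (1 : ℝ) := by simp
        _ ≤ _ := Finset.sum_le_sum fun l _ => one_le_pow₀ (ha1 N)
      have hkpos : (0 : ℝ) < k := by
        have : 2 ≤ k := hk.1
        positivity
      have hnum : a N ^ k - a N ^ (k - 1) ≤ Real.exp lam * (a N - 1) := by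
        have hfact : a N ^ k - a N ^ (k - 1) = a N ^ (k - 1) * (a N - 1) := by
          have hpow : a N ^ k = a N ^ (k - 1) * a N := by
            rw [← pow_succ]
            congr 1
            omega
          rw [hpow]; ring
        rw [hfact]
        have h1 : a N ^ (k - 1) ≤ a N ^ (N + 1) := pow_le_pow_right₀ (ha1 N) (by omega)
        rw [haN N] at h1
        have h2 : 0 ≤ a N - 1 := by linarith [ha1 N]
        exact mul_le_mul_of_nonneg_right h1 h2
      calc (a N ^ k - a N ^ (k - 1)) / (∑ l ∈ Finset.range k, a N ^ l)
          ≤ (Real.exp lam * (a N - 1)) / k := div_le_div₀ hc0 hnum hkpos hden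
        _ = Real.exp lam * (a N - 1) * (k : ℝ)⁻¹ := by rw [div_eq_mul_inv]
    calc S N ≤ ∑ k ∈ Finset.Icc 2 (N + 1), Real.exp lam * (a N - 1) * (k : ℝ)⁻¹ :=
          Finset.sum_le_sum hterm
      _ = Real.exp lam * (a N - 1) * ∑ k ∈ Finset.Icc 2 (N + 1), (k : ℝ)⁻¹ := by
          rw [Finset.mul_sum]
      _ ≤ Real.exp lam * (a N - 1) * (1 + Real.log (N + 1)) := by
          apply mul_le_mul_of_nonneg_left _ hc0
          have hsub : ∑ k ∈ Finset.Icc 2 (N + 1), (k : ℝ)⁻¹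
              ≤ ∑ k ∈ Finset.Icc 1 (N + 1), (k : ℝ)⁻¹ := by
            apply Finset.sum_le_sum_of_subset_of_nonneg
            · exact Finset.Icc_subset_Icc_left (by norm_num)
            · intro i _ _; positivity
          have hharm := harmonic_le_one_add_log (N + 1)
          have hcast : ((harmonic (N + 1) : ℚ) : ℝ) = ∑ k ∈ Finset.Icc 1 (N + 1), (k : ℝ)⁻¹ := by
            rw [harmonic_eq_sum_Icc]
            push_cast
            rfl
          rw [hcast] at hharm
          calc ∑ k ∈ Finset.Icc 2 (N + 1), (k : ℝ)⁻¹ ≤ _ := hsub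
            _ ≤ 1 + Real.log (N + 1) := by simpa using hharm
  -- a N tends to 1
  have hA : Tendsto a atTop (nhds 1) := by
    have h0 : Tendsto (fun N : ℕ => lam / (N + 1)) atTop (nhds 0) := by
      have := tendsto_one_div_add_atTop_nhds_zero_nat.const_mul lam
      simpa [div_eq_mul_inv, mul_one_div] using this
    have := (Real.continuous_exp.tendsto 0).comp h0
    rw [Real.exp_zero] at this; exact this
  -- the bound tends to 0
  have hB : Tendsto (fun N : ℕ => Real.exp lam * (a N - 1) * (1 + Real.log (N + 1)))
      atTop (nhds 0) := by
    apply squeeze_zero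
    · intro N
      have h1 := ha1 N
      have hlog : (0 : ℝ) ≤ Real.log (N + 1) := Real.log_nonneg (by norm_num)
      exact mul_nonneg (mul_nonneg (Real.exp_pos lam).le (by linarith)) (by linarith)
    · intro N
      show Real.exp lam * (a N - 1) * (1 + Real.log (N + 1))
        ≤ (lam * Real.exp lam * Real.exp lam) * ((1 + Real.log (N + 1)) / (N + 1))
      have hx : (0 : ℝ) ≤ lam / (N + 1) := by positivity
      have h1 : a N - 1 ≤ (lam / (N + 1)) * a N := aux_exp_sub_one_le hx
      have h2 : a N ≤ Real.exp lam := by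
        rw [ha]
        apply Real.exp_le_exp.mpr
        rw [div_le_iff₀ (by positivity)]
        nlinarith [Nat.cast_nonneg (α := ℝ) N]
      have hlog : (0 : ℝ) ≤ 1 + Real.log (N + 1) := by
        have := Real.log_nonneg (show (1:ℝ) ≤ N + 1 by norm_num)
        linarith
      have hNpos : (0 : ℝ) < N + 1 := by positivity
      have h3 : a N - 1 ≤ lam * Real.exp lam / (N + 1) := by
        calc a N - 1 ≤ (lam / (N + 1)) * a N := h1
          _ ≤ (lam / (N + 1)) * Real.exp lam := by
              apply mul_le_mul_of_nonneg_left h2 (by positivity)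
          _ = lam * Real.exp lam / (N + 1) := by ring
      have hexp := Real.exp_pos lam
      calc Real.exp lam * (a N - 1) * (1 + Real.log (N + 1))
          ≤ Real.exp lam * (lam * Real.exp lam / (N + 1)) * (1 + Real.log (N + 1)) := by
            apply mul_le_mul_of_nonneg_right _ hlog
            exact mul_le_mul_of_nonneg_left h3 hexp.le
        _ = (lam * Real.exp lam * Real.exp lam) * ((1 + Real.log (N + 1)) / (N + 1)) := by
            ring
    · have := aux_log_tendsto.const_mul (lam * Real.exp lam * Real.exp lam)
      simpa using this
  -- squeeze
  have hupper : Tendsto (fun N => a N + Real.exp lam * (a N - 1) * (1 + Real.log (N + 1)))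
      atTop (nhds 1) := by
    have := hA.add hB
    simpa using this
  refine tendsto_of_tendsto_of_tendsto_of_le_of_le hA hupper ?_ ?_
  · intro N
    exact le_add_of_nonneg_right (hS0 N)
  · intro N
    exact add_le_add_right (hSle N) _
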